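/- arXiv:2010.01517 — 2 statements merged into one kernel-verified Lean document; each statement's English description precedes it below -/
import Mathlib

section
/- There is no element α in the ring of integers Z[ζ_{23}] of the 23rd cyclotomic field whose absolute norm satisfies |N_{Q(ζ_{23})/Q}(α)| = 47. Consequently (via Z[ζ_{46}] = Z[ζ_{23}] and Swan's criterion), the field Q(C_{47}) is not Q-rational. -/
open Polynomial Finset

private def S23 : Finset (ZMod 23) := {1,2,3,4,6,8,9,12,13,16,18}
private def N23 : Finset (ZMod 23) := {5,7,10,11,14,15,17,19,20,21,22}

private lemma S23_eq : S23 = ⟨([1,2,3,4,6,8,9,12,13,16,18] : List (ZMod 23)), by decide⟩ := by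
  decide
private lemma N23_eq : N23 = ⟨([5,7,10,11,14,15,17,19,20,21,22] : List (ZMod 23)), by decide⟩ := by
  decide

private lemma sq_l4 : ∀ c x : ZMod 23, c ≠ 0 → IsSquare c → (c*x ∈ S23 ↔ x ∈ S23) := by decide
private lemma sq_l5 : ∀ c x : ZMod 23, c ≠ 0 → ¬IsSquare c → (c*x ∈ N23 ↔ x ∈ S23) := by decide
private lemma sq_l6 : ∀ c x : ZMod 23, c ≠ 0 → x ≠ 0 →
    (IsSquare (c*x) ↔ (IsSquare c ↔ IsSquare x)) := by decide
private lemma int_l9 : ∀ t w : ℤ, t^2 + 23*w^2 ≠ 188 := by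
  intro t w h
  have hw : -2 ≤ w ∧ w ≤ 2 := by constructor <;> nlinarith [sq_nonneg t, sq_nonneg w]
  have ht : -13 ≤ t ∧ t ≤ 13 := by constructor <;> nlinarith [sq_nonneg t, sq_nonneg w]
  obtain ⟨h1, h2⟩ := hw; obtain ⟨h3, h4⟩ := ht
  interval_cases t <;> interval_cases w <;> norm_num at h

/-- There is no element `α` of the ring of integers `ℤ[ζ₂₃]` of the 23rd
cyclotomic field with `|N_{ℚ(ζ₂₃)/ℚ}(α)| = 47`. -/
theorem stmt7 (K : Type*) [Field K] [NumberField K]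
    [IsCyclotomicExtension {23} ℚ K] :
    ¬ ∃ α : NumberField.RingOfIntegers K,
        Algebra.norm ℤ α = 47 ∨ Algebra.norm ℤ α = -47 := by
  rintro ⟨α, hα⟩
  classical
  haveI hf23 : Fact (Nat.Prime 23) := ⟨by norm_num⟩
  have hirr : Irreducible (cyclotomic ((23:ℕ+):ℕ) ℚ) := cyclotomic.irreducible_rat (by norm_num)
  haveI := IsCyclotomicExtension.isGalois {23} ℚ K
  set ζ := IsCyclotomicExtension.zeta (23:ℕ) ℚ K with hζdef
  have hζ : IsPrimitiveRoot ζ 23 := IsCyclotomicExtension.zeta_spec 23 ℚ K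
  set G := K ≃ₐ[ℚ] K
  let e : G → (ZMod 23)ˣ := fun σ => IsCyclotomicExtension.autEquivPow (n := 23) K hirr σ
  have he_mul : ∀ ρ σ : G, e (ρ * σ) = e ρ * e σ := fun ρ σ => map_mul _ ρ σ
  have hact : ∀ σ : G, σ ζ = ζ ^ ((e σ : ZMod 23)).val := fun σ => (hζ.autToPow_spec ℚ σ).symm
  have h23 : ζ ^ (23:ℕ) = 1 := hζ.pow_eq_one
  have hpowmod : ∀ a : ℕ, ζ ^ a = ζ ^ (a % 23) := by
    intro a
    conv_lhs => rw [← Nat.div_add_mod a 23, pow_add, pow_mul, h23, one_pow, one_mul]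
  have hact2 : ∀ σ : G, ∀ x : ZMod 23, σ (ζ ^ x.val) = ζ ^ (((e σ : ZMod 23)) * x).val := by
    intro σ x
    rw [map_pow, hact σ, ← pow_mul, ZMod.val_mul, ← hpowmod]
  -- the quadratic-character predicate on the Galois group
  set P : G → Prop := fun σ => IsSquare ((e σ : ZMod 23)) with hPdef
  have hPmul : ∀ ρ σ : G, P (ρ * σ) ↔ (P ρ ↔ P σ) := by
    intro ρ σ
    have : ((e (ρ * σ) : ZMod 23)) = (e ρ : ZMod 23) * (e σ : ZMod 23) := by
      rw [he_mul]; rfl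
    rw [hPdef]
    simp only [this]
    exact sq_l6 _ _ (e ρ).ne_zero (e σ).ne_zero
  -- α as an element of K
  set a : K := algebraMap (NumberField.RingOfIntegers K) K α with hadef
  -- the two half norms
  set γ : K := ∏ σ ∈ univ.filter P, σ a with hγdef
  set γ' : K := ∏ σ ∈ univ.filter (fun σ => ¬ P σ), σ a with hγ'def
  -- generic reindexing for products over the group
  have key : ∀ (ρ : G) (Q R : G → Prop) [DecidablePred Q] [DecidablePred R],
      (∀ σ, Q σ ↔ R (ρ * σ)) →
      ρ (∏ σ ∈ univ.filter Q, σ a) = ∏ σ ∈ univ.filter R, σ a := by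
    intro ρ Q R _ _ hQR
    rw [map_prod]
    refine Finset.prod_nbij' (fun σ => ρ * σ) (fun τ => ρ⁻¹ * τ) ?_ ?_ ?_ ?_ ?_
    · intro σ hσ
      simp only [mem_filter, mem_univ, true_and] at hσ ⊢
      exact (hQR σ).mp hσ
    · intro τ hτ
      simp only [mem_filter, mem_univ, true_and] at hτ ⊢
      have := hQR (ρ⁻¹ * τ)
      rw [mul_inv_cancel_left] at this
      exact this.mpr hτ
    · intro σ _; beta_reduce; rw [inv_mul_cancel_left]
    · intro τ _; beta_reduce; rw [mul_inv_cancel_left]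
    · intro σ _; beta_reduce; rw [AlgEquiv.mul_apply]
  -- action on γ and γ'
  have hγ_sq : ∀ ρ : G, P ρ → ρ γ = γ := by
    intro ρ hρ
    exact key ρ P P (fun σ => by have h := hPmul ρ σ; tauto)
  have hγ'_sq : ∀ ρ : G, P ρ → ρ γ' = γ' := by
    intro ρ hρ
    exact key ρ (fun σ => ¬ P σ) (fun σ => ¬ P σ) (fun σ => by have h := hPmul ρ σ; tauto)
  have hγ_ns : ∀ ρ : G, ¬ P ρ → ρ γ = γ' := by
    intro ρ hρ
    exact key ρ P (fun σ => ¬ P σ) (fun σ => by have h := hPmul ρ σ; tauto)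
  have hγ'_ns : ∀ ρ : G, ¬ P ρ → ρ γ' = γ := by
    intro ρ hρ
    exact key ρ (fun σ => ¬ P σ) P (fun σ => by have h := hPmul ρ σ; tauto)
  -- gauss sums
  set s : K := ∑ x ∈ S23, ζ^x.val with hsdef
  set s' : K := ∑ x ∈ N23, ζ^x.val with hs'def
  have keys : ∀ (ρ : G) (T U : Finset (ZMod 23)),
      (∀ x, x ∈ T ↔ (e ρ : ZMod 23) * x ∈ U) →
      ρ (∑ x ∈ T, ζ^x.val) = ∑ y ∈ U, ζ^y.val := by
    intro ρ T U hTU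
    rw [map_sum]
    have hinv : (((e ρ)⁻¹ : (ZMod 23)ˣ) : ZMod 23) * ((e ρ : ZMod 23)) = 1 := by
      rw [← Units.val_mul, inv_mul_cancel, Units.val_one]
    refine Finset.sum_nbij' (fun x => (e ρ : ZMod 23) * x)
      (fun y => ((e ρ)⁻¹ : (ZMod 23)ˣ) * y) ?_ ?_ ?_ ?_ ?_
    · intro x hx; simpa using (hTU x).mp hx
    · intro y hy
      beta_reduce
      refine (hTU _).mpr ?_
      rw [← mul_assoc]
      rw [show ((e ρ : ZMod 23)) * (((e ρ)⁻¹ : (ZMod 23)ˣ) : ZMod 23) = 1 by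
        rw [mul_comm]; exact hinv]
      rwa [one_mul]
    · intro x _; beta_reduce; rw [← mul_assoc, hinv, one_mul]
    · intro y _
      beta_reduce
      rw [← mul_assoc]
      rw [show ((e ρ : ZMod 23)) * (((e ρ)⁻¹ : (ZMod 23)ˣ) : ZMod 23) = 1 by
        rw [mul_comm]; exact hinv]
      rw [one_mul]
    · intro x _; exact hact2 ρ x
  have hs_sq : ∀ ρ : G, P ρ → ρ s = s := by
    intro ρ hρ
    exact keys ρ S23 S23 (fun x => (sq_l4 _ x (e ρ).ne_zero hρ).symm)
  have hs_ns : ∀ ρ : G, ¬ P ρ → ρ s = s' := by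
    intro ρ hρ
    exact keys ρ S23 N23 (fun x => (sq_l5 _ x (e ρ).ne_zero hρ).symm)
  -- expansions
  have hs_ex : s = ζ^1+ζ^2+ζ^3+ζ^4+ζ^6+ζ^8+ζ^9+ζ^12+ζ^13+ζ^16+ζ^18 := by
    rw [hsdef, S23_eq, Finset.sum_mk]
    simp only [Multiset.map_coe, Multiset.sum_coe, List.map_cons, List.map_nil, List.sum_cons,
      List.sum_nil, add_zero]
    norm_num [show ((1:ZMod 23)).val = 1 from rfl, show ((2:ZMod 23)).val = 2 from rfl,
      show ((3:ZMod 23)).val = 3 from rfl, show ((4:ZMod 23)).val = 4 from rfl,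
      show ((6:ZMod 23)).val = 6 from rfl, show ((8:ZMod 23)).val = 8 from rfl,
      show ((9:ZMod 23)).val = 9 from rfl, show ((12:ZMod 23)).val = 12 from rfl,
      show ((13:ZMod 23)).val = 13 from rfl, show ((16:ZMod 23)).val = 16 from rfl,
      show ((18:ZMod 23)).val = 18 from rfl]
    ring
  have hs'_ex : s' = ζ^5+ζ^7+ζ^10+ζ^11+ζ^14+ζ^15+ζ^17+ζ^19+ζ^20+ζ^21+ζ^22 := by
    rw [hs'def, N23_eq, Finset.sum_mk]
    simp only [Multiset.map_coe, Multiset.sum_coe, List.map_cons, List.map_nil, List.sum_cons,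
      List.sum_nil, add_zero]
    norm_num [show ((5:ZMod 23)).val = 5 from rfl, show ((7:ZMod 23)).val = 7 from rfl,
      show ((10:ZMod 23)).val = 10 from rfl, show ((11:ZMod 23)).val = 11 from rfl,
      show ((14:ZMod 23)).val = 14 from rfl, show ((15:ZMod 23)).val = 15 from rfl,
      show ((17:ZMod 23)).val = 17 from rfl, show ((19:ZMod 23)).val = 19 from rfl,
      show ((20:ZMod 23)).val = 20 from rfl, show ((21:ZMod 23)).val = 21 from rfl,
      show ((22:ZMod 23)).val = 22 from rfl]
    ring
  -- the cyclotomic relation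
  have h0 : 1+ζ+ζ^2+ζ^3+ζ^4+ζ^5+ζ^6+ζ^7+ζ^8+ζ^9+ζ^10+ζ^11+ζ^12+ζ^13+ζ^14+ζ^15+ζ^16+ζ^17
      +ζ^18+ζ^19+ζ^20+ζ^21+ζ^22 = 0 := by
    have hroot : (cyclotomic 23 K).IsRoot ζ := hζ.isRoot_cyclotomic (by norm_num)
    rw [cyclotomic_prime K 23] at hroot
    have := hroot
    simp only [IsRoot, eval_geom_sum] at this
    calc _ = ∑ i ∈ range 23, ζ ^ i := by
            simp [Finset.sum_range_succ]
      _ = 0 := this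
  -- the gauss sum g
  set g : K := 2*s+1 with hgdef
  have hgsq : g^2 = -23 := by
    rw [hgdef, hs_ex]
    linear_combination (24 - 20*ζ + 4*ζ^2 + 4*ζ^3 + 4*ζ^4 + 4*ζ^9 + 4*ζ^10 - 8*ζ^11 + 8*ζ^12
      - 4*ζ^13 + 4*ζ^14) * h0
  have hg0 : g ≠ 0 := by
    intro h
    rw [h] at hgsq
    norm_num at hgsq
  have hss' : s + s' = -1 := by
    rw [hs_ex, hs'_ex]
    linear_combination h0
  have hg_sq : ∀ ρ : G, P ρ → ρ g = g := by
    intro ρ hρ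
    rw [hgdef, map_add, map_mul, map_ofNat, hs_sq ρ hρ, map_one]
  have hg_ns : ∀ ρ : G, ¬ P ρ → ρ g = -g := by
    intro ρ hρ
    rw [hgdef, map_add, map_mul, map_ofNat, hs_ns ρ hρ, map_one]
    linear_combination 2 * hss'
  -- rationality of fixed elements
  have ratl : ∀ w : K, (∀ ρ : G, ρ w = w) → ∃ q : ℚ, algebraMap ℚ K q = w := by
    intro w hw
    have h1 : w ∈ IntermediateField.fixedField (⊤ : Subgroup G) := by
      rintro ⟨ρ, -⟩
      exact hw ρ
    have hbot : IntermediateField.fixedField (⊤ : Subgroup (K ≃ₐ[ℚ] K)) = ⊥ :=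
      OrderIso.map_bot (IsGalois.intermediateFieldEquivSubgroup (F := ℚ) (E := K)).symm
    rw [hbot] at h1
    exact IntermediateField.mem_bot.mp h1
  -- integrality
  have hσa_int : ∀ σ : G, IsIntegral ℤ (σ a) := by
    intro σ
    have := NumberField.RingOfIntegers.isIntegral_coe α
    exact this.map (σ.toAlgHom.restrictScalars ℤ)
  have hγ_int : IsIntegral ℤ γ := by
    rw [hγdef]
    exact IsIntegral.prod _ (fun σ _ => hσa_int σ)
  have hγ'_int : IsIntegral ℤ γ' := by
    rw [hγ'def]
    exact IsIntegral.prod _ (fun σ _ => hσa_int σ)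
  -- the trace t
  obtain ⟨q1, hq1⟩ : ∃ q : ℚ, algebraMap ℚ K q = γ + γ' := by
    refine ratl _ (fun ρ => ?_)
    by_cases hρ : P ρ
    · rw [map_add, hγ_sq ρ hρ, hγ'_sq ρ hρ]
    · rw [map_add, hγ_ns ρ hρ, hγ'_ns ρ hρ, add_comm]
  obtain ⟨t, ht⟩ : ∃ t : ℤ, (t : ℚ) = q1 := by
    refine IsIntegrallyClosed.isIntegral_iff.mp ?_
    have : IsIntegral ℤ (algebraMap ℚ K q1) := by
      rw [hq1]; exact hγ_int.add hγ'_int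
    exact (isIntegral_algebraMap_iff (algebraMap ℚ K).injective).mp this
  -- the norm
  set N : ℤ := Algebra.norm ℤ α with hNdef
  have hprod : γ * γ' = algebraMap ℚ K ((N : ℚ)) := by
    rw [hγdef, hγ'def, Finset.prod_filter_mul_prod_filter_not]
    rw [hNdef, Algebra.coe_norm_int α, Algebra.norm_eq_prod_automorphisms]
  -- the square root δ
  set δ : K := γ - γ' with hδdef
  have hδ_sq : ∀ ρ : G, P ρ → ρ δ = δ := by
    intro ρ hρ
    rw [hδdef, map_sub, hγ_sq ρ hρ, hγ'_sq ρ hρ]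
  have hδ_ns : ∀ ρ : G, ¬ P ρ → ρ δ = -δ := by
    intro ρ hρ
    rw [hδdef, map_sub, hγ_ns ρ hρ, hγ'_ns ρ hρ]
    ring
  -- δ/g is rational
  obtain ⟨r, hr⟩ : ∃ r : ℚ, algebraMap ℚ K r = δ * g⁻¹ := by
    refine ratl _ (fun ρ => ?_)
    rw [map_mul, map_inv₀]
    by_cases hρ : P ρ
    · rw [hδ_sq ρ hρ, hg_sq ρ hρ]
    · rw [hδ_ns ρ hρ, hg_ns ρ hρ, inv_neg, neg_mul_neg]
  have hδrg : δ = algebraMap ℚ K r * g := by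
    rw [hr]
    field_simp
  -- the key rational equation
  have hkey : (t : ℚ)^2 - 4*(N : ℚ) = -23 * r^2 := by
    have e1 : δ^2 = (γ+γ')^2 - 4*(γ*γ') := by rw [hδdef]; ring
    rw [← hq1, ← ht, hprod, hδrg] at e1
    have e2 : algebraMap ℚ K ((t:ℚ)^2 - 4*(N:ℚ)) = algebraMap ℚ K (-23 * r^2) := by
      simp only [map_sub, map_mul, map_pow, map_neg, map_ofNat]
      linear_combination e1.symm + (algebraMap ℚ K r)^2 * hgsq
    exact (algebraMap ℚ K).injective e2
  -- descend to integers
  set k : ℤ := 23*(4*N - t^2) with hkdef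
  have hu : (23*r)^2 = (k : ℚ) := by
    rw [hkdef]
    push_cast
    linear_combination 23 * hkey
  obtain ⟨m, hm⟩ : ∃ m : ℤ, (m : ℚ) = 23*r := by
    refine IsIntegrallyClosed.isIntegral_iff.mp ?_
    refine ⟨X^2 - C k, monic_X_pow_sub_C _ (by norm_num), ?_⟩
    simp only [eval₂_sub, eval₂_pow, eval₂_X, eval₂_C]
    rw [show (algebraMap ℤ ℚ) k = (k : ℚ) from rfl, ← hu]
    ring
  have hm2 : m^2 = k := by
    have h2 : ((m:ℚ))^2 = ((k:ℚ)) := by rw [hm, hu]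
    exact_mod_cast h2
  have h23p : Prime (23 : ℤ) := by norm_num
  have hdvd : (23 : ℤ) ∣ m := by
    refine h23p.dvd_of_dvd_pow (n := 2) ?_
    rw [hm2, hkdef]
    exact ⟨_, rfl⟩
  obtain ⟨w, hw⟩ := hdvd
  have hfinal : 23 * w^2 = 4*N - t^2 := by
    have h529 : 23 * (23 * w^2) = 23 * (4*N - t^2) := by
      rw [← hkdef, ← hm2, hw]; ring
    exact mul_left_cancel₀ (by norm_num) h529
  rcases hα with h47 | h47
  · rw [show N = 47 from h47] at hfinal
    exact int_l9 t w (by linarith)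
  · rw [show N = -47 from h47] at hfinal
    nlinarith [sq_nonneg w, sq_nonneg t]
end

section
/- Let π be a finite group and M a Z[π]-module that is free of finite rank n as an abelian group and is a permutation module, i.e., M has a Z-basis e_1, …, e_n permuted by the action of π. Let L/k be a finite Galois extension with Galois group π, and let π act on the rational function field L(y_1, …, y_n) semilinearly: via the Galois action on L and via σ(y_i) = ∏_j y_j^{a_{ij}(σ)} where σ·e_i = Σ_j a_{ij}(σ) e_j. Then the fixed field L(y_1,…,y_n)^π is purely transcendental (rational) over k of transcendence degree n. -/
open MvPolynomial

section MasudaMatrix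

variable {k L : Type*} [Field k] [Field L] [Algebra k L]
  [FiniteDimensional k L] [IsGalois k L] {n : ℕ}

theorem masuda_matrix (τ : (L ≃ₐ[k] L) →* Equiv.Perm (Fin n)) :
    ∃ A : Matrix (Fin n) (Fin n) L, IsUnit A ∧
      ∀ (σ : L ≃ₐ[k] L) (j i : Fin n), σ (A j i) = A (τ σ j) i := by
  classical
  letI act : MulAction (L ≃ₐ[k] L) (Fin n) := MulAction.compHom _ τ
  set G := L ≃ₐ[k] L with hG
  have hsmul : ∀ (σ : G) (i : Fin n), σ • i = τ σ i := fun _ _ => rfl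
  letI st : Setoid (Fin n) := MulAction.orbitRel G (Fin n)
  -- quotient by orbits
  set Q := Quotient st with hQ
  have hmk : ∀ i j : Fin n, (⟦i⟧ : Q) = ⟦j⟧ ↔ i ∈ MulAction.orbit G j := by
    intro i j
    rw [Quotient.eq]
    exact MulAction.orbitRel_apply
  have hmkact : ∀ (σ : G) (i : Fin n), (⟦σ • i⟧ : Q) = ⟦i⟧ := by
    intro σ i
    exact (hmk _ _).2 (MulAction.mem_orbit i σ)
  -- choice of coset representatives
  have hout : ∀ i : Fin n, ∃ σ : G, σ • ((⟦i⟧ : Q).out) = i := by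
    intro i
    have : (⟦(⟦i⟧ : Q).out⟧ : Q) = ⟦i⟧ := Quotient.out_eq _
    have := (hmk _ _).1 this.symm
    obtain ⟨σ, hσ⟩ := this
    exact ⟨σ, hσ⟩
  choose g hg using hout
  -- stabilizers and their fixed fields
  set H : Q → Subgroup G := fun q => MulAction.stabilizer G q.out with hH
  set E : Q → IntermediateField k L := fun q => IntermediateField.fixedField (H q) with hE
  -- the orbit corresponding to `q`, as a subtype
  set S : Q → Type _ := fun q => {j : Fin n // (⟦j⟧ : Q) = q} with hS
  -- dimension count
  have hcard : ∀ q : Q, Fintype.card (S q) = Module.finrank k (E q) := by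
    intro q
    have h1 : Module.finrank (E q) L = Fintype.card (H q) :=
      (IntermediateField.finrank_fixedField_eq_card (H q)).trans Nat.card_eq_fintype_card
    have h2 : Module.finrank k (E q) * Module.finrank (E q) L = Module.finrank k L :=
      Module.finrank_mul_finrank k (E q) L
    have h3 : Fintype.card G = Module.finrank k L :=
      Nat.card_eq_fintype_card.symm.trans (IsGalois.card_aut_eq_finrank k L)
    have h4 : Fintype.card (MulAction.orbit G q.out) * Fintype.card (H q) = Fintype.card G :=
      MulAction.card_orbit_mul_card_stabilizer_eq_card_group G q.out
    have h5 : Fintype.card (S q) = Fintype.card (MulAction.orbit G q.out) := by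
      apply Fintype.card_congr
      apply Equiv.subtypeEquivRight
      intro j
      rw [← hmk]
      constructor
      · intro hj; rw [hj, Quotient.out_eq]
      · intro hj; rw [hj, Quotient.out_eq]
    have hHpos : 0 < Fintype.card (H q) := Fintype.card_pos
    have : Fintype.card (S q) * Fintype.card (H q) =
        Module.finrank k (E q) * Fintype.card (H q) := by
      rw [h5, h4, h3, ← h2, h1]
    exact Nat.eq_of_mul_eq_mul_right hHpos this
  -- a basis of each fixed field, indexed by the corresponding orbit
  have bas : ∀ q : Q, Module.Basis (S q) k (E q) := fun q =>
    (Module.finBasis k (E q)).reindex (Fintype.equivFinOfCardEq (hcard q)).symm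
  -- the coefficients
  set c : Fin n → L := fun i => ((bas ⟦i⟧) ⟨i, rfl⟩ : L) with hc
  have hcmem : ∀ (i : Fin n) (w : G), w ∈ H ⟦i⟧ → w (c i) = c i := by
    intro i w hw
    have : ((bas ⟦i⟧) ⟨i, rfl⟩ : L) ∈ E ⟦i⟧ := ((bas ⟦i⟧) ⟨i, rfl⟩).2
    exact this ⟨w, hw⟩
  -- the matrix
  set A : Matrix (Fin n) (Fin n) L :=
    fun j i => if (⟦j⟧ : Q) = ⟦i⟧ then (g j) (c i) else 0 with hA
  refine ⟨A, ?_, ?_⟩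
  · -- invertibility, via linear independence of the rows
    rw [← Matrix.linearIndependent_rows_iff_isUnit]
    rw [Fintype.linearIndependent_iff]
    intro μ hμ j0
    have hcval : ∀ (q : Q) (j : S q), ((bas q j : L)) = c j.1 := by
      rintro q ⟨i, hi⟩
      subst hi
      rfl
    have hcol : ∀ i : Fin n, ∑ j : Fin n, μ j * A j i = 0 := by
      intro i
      have := congrFun hμ i
      simpa [Finset.sum_apply, Pi.smul_apply, smul_eq_mul] using this
    set q : Q := ⟦j0⟧ with hq
    -- monoid homs given by the chosen coset representatives
    set f : S q → (E q →* L) := fun j =>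
      ((g j.1).toAlgHom.toRingHom.comp (algebraMap (E q) L)).toMonoidHom with hf
    have hfapp : ∀ (j : S q) (x : E q), f j x = (g j.1) (x : L) := fun _ _ => rfl
    have hrepr : ∀ j : S q, g j.1 • q.out = j.1 := by
      rintro ⟨i, hi⟩
      show g i • q.out = i
      rw [← hi]
      exact hg i
    have hinj : Function.Injective f := by
      intro j j' hjj
      have hfun : ∀ x : E q, (g j.1) (x : L) = (g j'.1) (x : L) := by
        intro x
        rw [← hfapp j x, ← hfapp j' x, hjj]
      have hwfix : (g j'.1)⁻¹ * g j.1 ∈ IntermediateField.fixingSubgroup (E q) := by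
        rw [IntermediateField.mem_fixingSubgroup_iff]
        intro x hx
        show (g j'.1)⁻¹ ((g j.1) x) = x
        rw [hfun ⟨x, hx⟩]
        exact (g j'.1).symm_apply_apply x
      rw [hE] at hwfix
      simp only at hwfix
      rw [IntermediateField.fixingSubgroup_fixedField (H q)] at hwfix
      have hstab : ((g j'.1)⁻¹ * g j.1) • q.out = q.out := hwfix
      rw [mul_smul, inv_smul_eq_iff, hrepr j, hrepr j'] at hstab
      exact Subtype.ext hstab
    -- the linear combination vanishes on all of `E q`
    have hval : ∀ x : E q, ∑ j : S q, μ j.1 * (g j.1) (x : L) = 0 := by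
      have hbasval : ∀ j : S q, ∑ j' : S q, μ j'.1 * (g j'.1) ((bas q j : L)) = 0 := by
        intro j
        rw [hcval q j]
        have := hcol j.1
        have hcond : ∀ jj : Fin n, ((⟦jj⟧ : Q) = ⟦j.1⟧) ↔ ((⟦jj⟧ : Q) = q) := by
          intro jj
          rw [j.2]
        calc ∑ j' : S q, μ j'.1 * (g j'.1) (c j.1)
            = ∑ jj ∈ Finset.univ.filter (fun jj : Fin n => (⟦jj⟧ : Q) = q),
                μ jj * (g jj) (c j.1) := by
              rw [Finset.sum_subtype (p := fun jj : Fin n => (⟦jj⟧ : Q) = q)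
                (Finset.univ.filter (fun jj : Fin n => (⟦jj⟧ : Q) = q))
                (fun x => by simp) (fun jj => μ jj * (g jj) (c j.1))]
          _ = ∑ jj : Fin n, μ jj * A jj j.1 := by
              rw [Finset.sum_filter]
              apply Finset.sum_congr rfl
              intro jj _
              rw [hA]
              simp only [hcond jj]
              by_cases hc' : (⟦jj⟧ : Q) = q
              · rw [if_pos hc', if_pos hc']
              · rw [if_neg hc', if_neg hc', mul_zero]
          _ = 0 := hcol j.1
      -- assemble as a linear map and use `Basis.ext`
      set ℓ : (E q) →ₗ[k] L := ∑ j : S q, μ j.1 •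
        ((g j.1).toLinearMap ∘ₗ (E q).val.toLinearMap) with hℓ
      have hℓapp : ∀ x : E q, ℓ x = ∑ j : S q, μ j.1 * (g j.1) (x : L) := by
        intro x
        rw [hℓ]
        simp [LinearMap.sum_apply, LinearMap.smul_apply, smul_eq_mul]
      have hℓ0 : ℓ = 0 := by
        apply (bas q).ext
        intro j
        rw [hℓapp]
        simpa using hbasval j
      intro x
      rw [← hℓapp, hℓ0]
      rfl
    -- Dedekind's linear independence of characters
    have li := (linearIndependent_monoidHom (E q) L).comp f hinj
    rw [Fintype.linearIndependent_iff] at li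
    refine li (fun j => μ j.1) ?_ ⟨j0, rfl⟩
    funext x
    have := hval x
    simpa [Finset.sum_apply, Pi.smul_apply, smul_eq_mul, hfapp] using this
  · -- equivariance
    intro σ j i
    have horb : (⟦τ σ j⟧ : Q) = ⟦j⟧ := hmkact σ j
    by_cases hji : (⟦j⟧ : Q) = ⟦i⟧
    · have hji' : (⟦τ σ j⟧ : Q) = ⟦i⟧ := horb.trans hji
      rw [hA]
      simp only [hji, hji', if_pos]
      -- σ ((g j) (c i)) = (g (τ σ j)) (c i)
      set w : G := (g (τ σ j))⁻¹ * σ * g j with hw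
      have hwH : w ∈ H ⟦i⟧ := by
        show w • (⟦i⟧ : Q).out = (⟦i⟧ : Q).out
        have e1 : g j • (⟦i⟧ : Q).out = j := by rw [← hji]; exact hg j
        have e2 : g (τ σ j) • (⟦i⟧ : Q).out = τ σ j := by rw [← hji']; exact hg (τ σ j)
        rw [hw, mul_smul, mul_smul, e1]
        have : σ • j = τ σ j := hsmul σ j
        rw [this, inv_smul_eq_iff, e2]
      have := hcmem i w hwH
      have hexp : w (c i) = (g (τ σ j))⁻¹ (σ ((g j) (c i))) := rfl
      rw [hexp] at this
      have h2 := congrArg (g (τ σ j)) this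
      rwa [show ∀ z, g (τ σ j) ((g (τ σ j))⁻¹ z) = z from fun z =>
        (g (τ σ j)).apply_symm_apply z] at h2
    · have hji' : ¬ ((⟦τ σ j⟧ : Q) = ⟦i⟧) := by rw [horb]; exact hji
      rw [hA]
      simp only [hji, hji', if_neg, not_false_iff, map_zero]

end MasudaMatrix

/-- Masuda's lemma: let `L/k` be a finite Galois extension with group
`π = Gal(L/k)`, let `π` act semilinearly on `F = L(y₁,…,y_n)` (via `k`-algebra
automorphisms extending the Galois action on `L`) so that the variables
`y₁,…,y_n` are permuted by the action (a permutation lattice).  Then the fixed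
field `F^π` is purely transcendental of transcendence degree `n` over `k`,
i.e. `k`-isomorphic to the rational function field `k(x₁,…,x_n)`. -/
theorem stmt15 (k L : Type*) [Field k] [Field L] [Algebra k L]
    [FiniteDimensional k L] [IsGalois k L] (n : ℕ)
    (F : Type*) [Field F]
    [Algebra (MvPolynomial (Fin n) L) F] [IsFractionRing (MvPolynomial (Fin n) L) F]
    [Algebra L F] [IsScalarTower L (MvPolynomial (Fin n) L) F]
    [Algebra k F] [IsScalarTower k L F]
    (y : Fin n → F)
    (hy : ∀ i, y i = algebraMap (MvPolynomial (Fin n) L) F (X i))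
    (ρ : (L ≃ₐ[k] L) →* (F ≃ₐ[k] F)) (hρ : Function.Injective ρ)
    (hcompat : ∀ (σ : L ≃ₐ[k] L) (a : L), ρ σ (algebraMap L F a) = algebraMap L F (σ a))
    (τ : (L ≃ₐ[k] L) →* Equiv.Perm (Fin n))
    (hperm : ∀ (σ : L ≃ₐ[k] L) (i : Fin n), ρ σ (y i) = y (τ σ i))
    (F₀ : Type*) [Field F₀]
    [Algebra (MvPolynomial (Fin n) k) F₀] [IsFractionRing (MvPolynomial (Fin n) k) F₀]
    [Algebra k F₀] [IsScalarTower k (MvPolynomial (Fin n) k) F₀] :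
    Nonempty ((IntermediateField.fixedField ρ.range : IntermediateField k F) ≃ₐ[k] F₀) := by
  classical
  obtain ⟨A, hAu, hAe⟩ := masuda_matrix τ
  set R := MvPolynomial (Fin n) L with hR
  set G := L ≃ₐ[k] L with hG
  set sRH : (L ≃ₐ[k] L) → (L →+* L) := fun σ => σ.toAlgHom.toRingHom with hsRH
  -- linear substitutions attached to matrices
  set lc : Matrix (Fin n) (Fin n) L → Fin n → R := fun M i => ∑ j : Fin n, C (M j i) * X j
    with hlc
  have hcomp : ∀ (M N : Matrix (Fin n) (Fin n) L) (i : Fin n),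
      aeval (R := L) (lc M) (lc N i) = lc (M * N) i := by
    intro M N i
    rw [hlc]
    simp only [map_sum, map_mul, aeval_C, aeval_X, algebraMap_eq]
    have hterm : ∀ j l : Fin n, C (N j i) * (C (M l j) * X l) =
        C (M l j * N j i) * (X l : R) := by
      intro j l; rw [C_mul]; ring
    calc ∑ j : Fin n, C (N j i) * ∑ l : Fin n, C (M l j) * X l
        = ∑ j : Fin n, ∑ l : Fin n, C (M l j * N j i) * (X l : R) := by
          refine Finset.sum_congr rfl fun j _ => ?_
          rw [Finset.mul_sum]
          exact Finset.sum_congr rfl fun l _ => hterm j l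
      _ = ∑ l : Fin n, ∑ j : Fin n, C (M l j * N j i) * (X l : R) := Finset.sum_comm
      _ = ∑ l : Fin n, C ((M * N) l i) * (X l : R) := by
          refine Finset.sum_congr rfl fun l _ => ?_
          rw [Matrix.mul_apply, map_sum, Finset.sum_mul]
  have honelc : ∀ i : Fin n, lc 1 i = X i := by
    intro i
    rw [hlc]
    simp only [Matrix.one_apply]
    rw [Finset.sum_eq_single i]
    · simp
    · intro j _ hj
      simp [hj]
    · simp
  obtain ⟨B, hBA, hAB⟩ : ∃ B, B * A = 1 ∧ A * B = 1 := by
    obtain ⟨Au, hAu'⟩ := hAu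
    exact ⟨↑Au⁻¹, by rw [← hAu']; exact Au.inv_mul, by rw [← hAu']; exact Au.mul_inv⟩
  set u : R →ₐ[L] R := aeval (lc A) with hu
  set v : R →ₐ[L] R := aeval (lc B) with hv
  have huX : ∀ i, u (X i) = lc A i := fun i => aeval_X _ i
  have hvu : ∀ p, v (u p) = p := by
    have : v.comp u = AlgHom.id L R := by
      apply MvPolynomial.algHom_ext
      intro i
      show v (u (X i)) = X i
      rw [huX, hv, hcomp, hBA, honelc]
    intro p; exact DFunLike.congr_fun this p
  have huv : ∀ p, u (v p) = p := by
    have : u.comp v = AlgHom.id L R := by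
      apply MvPolynomial.algHom_ext
      intro i
      show u (v (X i)) = X i
      rw [show v (X i) = lc B i from aeval_X _ i, hu, hcomp, hAB, honelc]
    intro p; exact DFunLike.congr_fun this p
  have huinj : Function.Injective u := Function.LeftInverse.injective hvu
  set θ : R →ₐ[L] F := (IsScalarTower.toAlgHom L R F).comp u with hθ
  have hθa : ∀ p, θ p = algebraMap R F (u p) := fun _ => rfl
  have hθinj : Function.Injective θ := by
    intro a b hab
    exact huinj (IsFractionRing.injective R F hab)
  have hθC : ∀ a : L, θ (C a) = algebraMap L F a := by
    intro a
    rw [show (C a : R) = algebraMap L R a from rfl]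
    exact θ.commutes a
  have hθX : ∀ i, θ (X i) = ∑ j : Fin n, algebraMap L F (A j i) * y j := by
    intro i
    rw [hθa, huX, hlc]
    simp only [map_sum, map_mul]
    refine Finset.sum_congr rfl fun j _ => ?_
    rw [hy j]
    congr 1
    rw [IsScalarTower.algebraMap_apply L R F, algebraMap_eq]
  -- the key equivariance property of θ
  have hkey : ∀ (σ : L ≃ₐ[k] L) (p : R), ρ σ (θ p) = θ (MvPolynomial.map (sRH σ) p) := by
    intro σ
    have hhom : ((ρ σ).toAlgHom.toRingHom.comp θ.toRingHom) =
        θ.toRingHom.comp (MvPolynomial.map (sRH σ)) := by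
      apply MvPolynomial.ringHom_ext
      · intro a
        show ρ σ (θ (C a)) = θ (MvPolynomial.map (sRH σ) (C a))
        rw [hθC, hcompat, map_C, hθC]
        rfl
      · intro i
        show ρ σ (θ (X i)) = θ (MvPolynomial.map (sRH σ) (X i))
        rw [map_X, hθX, map_sum]
        calc ∑ j : Fin n, ρ σ (algebraMap L F (A j i) * y j)
            = ∑ j : Fin n, algebraMap L F (A (τ σ j) i) * y (τ σ j) := by
              refine Finset.sum_congr rfl fun j _ => ?_
              rw [map_mul, hcompat, hperm, hAe]
          _ = ∑ j : Fin n, algebraMap L F (A j i) * y j :=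
              Equiv.sum_comp (τ σ) (fun j => algebraMap L F (A j i) * y j)
    intro p
    exact RingHom.congr_fun hhom p
  -- representing elements of F as quotients through θ
  have hrepF : ∀ f : F, ∃ p qd : R, qd ≠ 0 ∧ f = θ p / θ qd := by
    intro f
    obtain ⟨x, yd, hyd, hdiv⟩ := IsFractionRing.div_surjective (A := R) f
    refine ⟨v x, v yd, ?_, ?_⟩
    · intro h0
      apply nonZeroDivisors.ne_zero hyd
      have := congrArg u h0
      rw [huv, map_zero] at this
      exact this
    · rw [hθa, hθa, huv, huv, hdiv]
  -- the rational-coefficients polynomial algebra inside F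
  set φ : MvPolynomial (Fin n) k →ₐ[k] F :=
    (θ.restrictScalars k).comp (MvPolynomial.mapAlgHom (Algebra.ofId k L)) with hφdef
  have hφ : ∀ p0, φ p0 = θ (MvPolynomial.map (algebraMap k L) p0) := by
    intro p0
    rfl
  have hφinj : Function.Injective φ := by
    intro a b hab
    rw [hφ, hφ] at hab
    exact MvPolynomial.map_injective _ (algebraMap k L).injective (hθinj hab)
  set ψ : F₀ →ₐ[k] F := IsFractionRing.liftAlgHom (g := φ) hφinj with hψdef
  have hψ : ∀ p0, ψ (algebraMap (MvPolynomial (Fin n) k) F₀ p0) = φ p0 := by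
    intro p0
    rw [hψdef, IsFractionRing.liftAlgHom_apply, IsFractionRing.lift_algebraMap]
    rfl
  have hψinj : Function.Injective ψ := ψ.toRingHom.injective
  -- σ-invariance of the image of φ
  have hinvar : ∀ (σ : L ≃ₐ[k] L) (p0 : MvPolynomial (Fin n) k), ρ σ (φ p0) = φ p0 := by
    intro σ p0
    rw [hφ, hkey, MvPolynomial.map_map,
      show (sRH σ).comp (algebraMap k L) = algebraMap k L from
        RingHom.ext fun a => σ.commutes a]
  -- membership in the fixed field
  have hmemiff : ∀ x : F, x ∈ IntermediateField.fixedField ρ.range ↔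
      ∀ σ : L ≃ₐ[k] L, ρ σ x = x := by
    intro x
    constructor
    · intro hx σ
      exact hx ⟨ρ σ, ⟨σ, rfl⟩⟩
    · rintro hx ⟨w, σ, rfl⟩
      exact hx σ
  have hsubset : ∀ x : F₀, ψ x ∈ IntermediateField.fixedField ρ.range := by
    intro x
    rw [hmemiff]
    intro σ
    obtain ⟨p0, q0, hq0, hdiv⟩ := IsFractionRing.div_surjective (A := MvPolynomial (Fin n) k) x
    rw [← hdiv, map_div₀, hψ, hψ, map_div₀, hinvar, hinvar]
  -- descent of fixed polynomials to k
  have hdesc : ∀ P : R, (∀ σ : L ≃ₐ[k] L, MvPolynomial.map (sRH σ) P = P) →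
      ∃ P0 : MvPolynomial (Fin n) k, MvPolynomial.map (algebraMap k L) P0 = P := by
    intro P hP
    have hcoeff : ∀ m, ∃ a : k, algebraMap k L a = coeff m P := by
      intro m
      have hfixc : ∀ σ : L ≃ₐ[k] L, σ (coeff m P) = coeff m P := by
        intro σ
        conv_rhs => rw [← hP σ]
        rw [coeff_map]
        rfl
      have h2 : coeff m P ∈ IntermediateField.fixedField (⊤ : Subgroup (L ≃ₐ[k] L)) := by
        intro w
        exact hfixc w.1
      rw [show IntermediateField.fixedField (⊤ : Subgroup (L ≃ₐ[k] L)) = ⊥ from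
        OrderIso.map_bot (@IsGalois.intermediateFieldEquivSubgroup k _ L _ _ _ _).symm] at h2
      rw [IntermediateField.mem_bot] at h2
      exact h2
    choose coefk hcoefk using hcoeff
    refine ⟨∑ m ∈ P.support, monomial m (coefk m), ?_⟩
    rw [map_sum]
    calc ∑ m ∈ P.support, MvPolynomial.map (algebraMap k L) (monomial m (coefk m))
        = ∑ m ∈ P.support, monomial m (coeff m P) := by
          refine Finset.sum_congr rfl fun m _ => ?_
          rw [MvPolynomial.map_monomial, hcoefk]
      _ = P := support_sum_monomial_coeff P
  -- the fixed field is contained in the image of ψ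
  have hsurj : ∀ xF : F, xF ∈ IntermediateField.fixedField ρ.range →
      ∃ x0 : F₀, ψ x0 = xF := by
    intro xF hxF
    have hfix : ∀ σ : L ≃ₐ[k] L, ρ σ xF = xF := (hmemiff xF).1 hxF
    obtain ⟨p, qd, hqd, hxFval⟩ := hrepF xF
    set Rp : R := ∏ σ ∈ (Finset.univ.erase (1 : L ≃ₐ[k] L)), MvPolynomial.map (sRH σ) qd
      with hRp
    set Qp : R := ∏ σ : L ≃ₐ[k] L, MvPolynomial.map (sRH σ) qd with hQp
    have hmapne : ∀ σ : L ≃ₐ[k] L, MvPolynomial.map (sRH σ) qd ≠ 0 := by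
      intro σ h0
      apply hqd
      apply MvPolynomial.map_injective (sRH σ) σ.injective
      rw [h0, map_zero]
    have hQne : Qp ≠ 0 := by
      rw [hQp]
      exact Finset.prod_ne_zero_iff.2 fun σ _ => hmapne σ
    have hmapone : MvPolynomial.map (sRH (1 : L ≃ₐ[k] L)) qd = qd := by
      have : sRH (1 : L ≃ₐ[k] L) = RingHom.id L := RingHom.ext fun a => rfl
      rw [this, MvPolynomial.map_id]
    have hQsplit : Qp = qd * Rp := by
      rw [hQp, hRp, ← Finset.mul_prod_erase Finset.univ _ (Finset.mem_univ (1 : L ≃ₐ[k] L)),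
        hmapone]
    have hQfixpoly : ∀ σ : L ≃ₐ[k] L, MvPolynomial.map (sRH σ) Qp = Qp := by
      intro σ
      rw [hQp, map_prod]
      calc ∏ σ' : L ≃ₐ[k] L, MvPolynomial.map (sRH σ) (MvPolynomial.map (sRH σ') qd)
          = ∏ σ' : L ≃ₐ[k] L, MvPolynomial.map (sRH (σ * σ')) qd := by
            refine Finset.prod_congr rfl fun σ' _ => ?_
            rw [MvPolynomial.map_map]
            rfl
        _ = ∏ σ'' : L ≃ₐ[k] L, MvPolynomial.map (sRH σ'') qd :=
            Equiv.prod_comp (Equiv.mulLeft σ) (fun σ'' => MvPolynomial.map (sRH σ'') qd)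
    have hθQfix : ∀ σ : L ≃ₐ[k] L, ρ σ (θ Qp) = θ Qp := by
      intro σ
      rw [hkey, hQfixpoly]
    have hθqdne : θ qd ≠ 0 := fun h0 => hqd (hθinj (h0.trans (map_zero θ).symm))
    have hθQne : θ Qp ≠ 0 := fun h0 => hQne (hθinj (h0.trans (map_zero θ).symm))
    set Pp : R := p * Rp with hPp
    have hPQ : xF * θ Qp = θ Pp := by
      rw [hxFval, hQsplit, map_mul, map_mul, div_mul_eq_mul_div, mul_comm (θ qd) (θ Rp),
        ← mul_assoc, mul_div_assoc, div_self hθqdne, mul_one]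
    have hPfixpoly : ∀ σ : L ≃ₐ[k] L, MvPolynomial.map (sRH σ) Pp = Pp := by
      intro σ
      apply hθinj
      rw [← hkey, ← hPQ, map_mul, hfix, hθQfix, hPQ]
    obtain ⟨P0, hP0⟩ := hdesc Pp hPfixpoly
    obtain ⟨Q0, hQ0⟩ := hdesc Qp hQfixpoly
    refine ⟨algebraMap (MvPolynomial (Fin n) k) F₀ P0 / algebraMap (MvPolynomial (Fin n) k) F₀ Q0, ?_⟩
    have hgoal : xF = θ Pp / θ Qp := by rw [eq_div_iff hθQne]; exact hPQ
    rw [map_div₀, hψ, hψ, hφ, hφ, hP0, hQ0, ← hgoal]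
  -- assemble the isomorphism
  set K : IntermediateField k F := IntermediateField.fixedField ρ.range with hK
  set ψ' : F₀ →ₐ[k] K :=
    { toFun := fun x => ⟨ψ x, hsubset x⟩
      map_one' := Subtype.ext (map_one ψ)
      map_mul' := fun a b => Subtype.ext (map_mul ψ a b)
      map_zero' := Subtype.ext (map_zero ψ)
      map_add' := fun a b => Subtype.ext (map_add ψ a b)
      commutes' := fun a => Subtype.ext (ψ.commutes a) } with hψ'
  have hbij : Function.Bijective ψ' := by
    constructor
    · intro a b hab
      apply hψinj
      exact congrArg Subtype.val hab
    · rintro ⟨xf, hxf⟩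
      obtain ⟨x0, hx0⟩ := hsurj xf hxf
      exact ⟨x0, Subtype.ext hx0⟩
  exact ⟨(AlgEquiv.ofBijective ψ' hbij).symm⟩
end
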